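/- Let t ∈ ℝ with t ∉ {−1,0,1}, and let x, y ∈ ℝ³ with x ≠ 0 and y ≠ 0. If p_t(x,y) = 0, then Φ_t(xxᵀ)·y = 0, i.e., y lies in the kernel of the positive semidefinite matrix Φ_t(xxᵀ). -/

import Mathlib

open Matrix

/-- The map `Φ_t` applied to a `3 × 3` matrix `A`. -/
def Phi (t : ℝ) (A : Matrix (Fin 3) (Fin 3) ℝ) : Matrix (Fin 3) (Fin 3) ℝ :=
  !![(t^2-1)^2 * A 0 0 + A 1 1 + t^4 * A 2 2, -(t^4-t^2+1) * A 0 1, -(t^4-t^2+1) * A 0 2;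
     -(t^4-t^2+1) * A 1 0, (t^2-1)^2 * A 1 1 + A 2 2 + t^4 * A 0 0, -(t^4-t^2+1) * A 1 2;
     -(t^4-t^2+1) * A 2 0, -(t^4-t^2+1) * A 2 1, (t^2-1)^2 * A 2 2 + A 0 0 + t^4 * A 1 1]

/-- The biquadratic form `p_t(x, y) = yᵀ Φ_t(xxᵀ) y`. -/
def pform (t : ℝ) (x y : Fin 3 → ℝ) : ℝ :=
  y ⬝ᵥ (Phi t (vecMulVec x x)).mulVec y

/-- The cubic form `G` whose nonnegativity on the nonnegative orthant is the heart of the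
positivity of `Φ_t`. -/
private lemma G_nonneg (s a b d : ℝ) (ha : 0 ≤ a) (hb : 0 ≤ b) (hd : 0 ≤ d) :
    0 ≤ s^2*(a^3+b^3+d^3) + (1-2*s^3)*(a^2*d+a*b^2+b*d^2)
      + (s^4-2*s)*(a^2*b+b^2*d+d^2*a) + (6*s^2-3*(s^2-s+1)^2)*(a*b*d) := by
  have quad : ∀ p q : ℝ, 0 ≤ p^2 - p*q + q^2 := by
    intro p q; nlinarith [sq_nonneg (p - q), sq_nonneg p, sq_nonneg q]
  rcases le_total a b with hab | hba
  · rcases le_total a d with had | hda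
    · -- a is the minimum
      have h1 : 0 ≤ (s^2-s+1)^2*a*((b-a)^2-(b-a)*(d-a)+(d-a)^2) :=
        mul_nonneg (mul_nonneg (sq_nonneg _) ha) (quad _ _)
      have h2 : 0 ≤ (s*(b-a)-(d-a))^2*((b-a)+s^2*(d-a)) :=
        mul_nonneg (sq_nonneg _)
          (add_nonneg (by linarith) (mul_nonneg (sq_nonneg s) (by linarith)))
      nlinarith [h1, h2]
    · -- d is the minimum (d ≤ a ≤ b)
      have h1 : 0 ≤ (s^2-s+1)^2*d*((a-d)^2-(a-d)*(b-d)+(b-d)^2) :=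
        mul_nonneg (mul_nonneg (sq_nonneg _) hd) (quad _ _)
      have h2 : 0 ≤ (s*(a-d)-(b-d))^2*((a-d)+s^2*(b-d)) :=
        mul_nonneg (sq_nonneg _)
          (add_nonneg (by linarith) (mul_nonneg (sq_nonneg s) (by linarith)))
      nlinarith [h1, h2]
  · rcases le_total b d with hbd | hdb
    · -- b is the minimum
      have h1 : 0 ≤ (s^2-s+1)^2*b*((d-b)^2-(d-b)*(a-b)+(a-b)^2) :=
        mul_nonneg (mul_nonneg (sq_nonneg _) hb) (quad _ _)
      have h2 : 0 ≤ (s*(d-b)-(a-b))^2*((d-b)+s^2*(a-b)) :=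
        mul_nonneg (sq_nonneg _)
          (add_nonneg (by linarith) (mul_nonneg (sq_nonneg s) (by linarith)))
      nlinarith [h1, h2]
    · -- d is the minimum (d ≤ b ≤ a)
      have h1 : 0 ≤ (s^2-s+1)^2*d*((a-d)^2-(a-d)*(b-d)+(b-d)^2) :=
        mul_nonneg (mul_nonneg (sq_nonneg _) hd) (quad _ _)
      have h2 : 0 ≤ (s*(a-d)-(b-d))^2*((a-d)+s^2*(b-d)) :=
        mul_nonneg (sq_nonneg _)
          (add_nonneg (by linarith) (mul_nonneg (sq_nonneg s) (by linarith)))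
      nlinarith [h1, h2]

/-- Nonnegativity of the determinant of `Φ_t(xxᵀ)` (bare, without the ε-shift). -/
private lemma det_bare_nonneg (s a b d : ℝ) (ha : 0 ≤ a) (hb : 0 ≤ b) (hd : 0 ≤ d) :
    0 ≤ ((s-1)^2*a+b+s^2*d)*((s-1)^2*b+d+s^2*a)*((s-1)^2*d+a+s^2*b)
        - 2*(s^2-s+1)^3*(a*b*d)
        - (s^2-s+1)^2*(((s-1)^2*a+b+s^2*d)*b*d + ((s-1)^2*b+d+s^2*a)*a*d
            + ((s-1)^2*d+a+s^2*b)*a*b) := by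
  have h := G_nonneg s a b d ha hb hd
  have key : ((s-1)^2*a+b+s^2*d)*((s-1)^2*b+d+s^2*a)*((s-1)^2*d+a+s^2*b)
        - 2*(s^2-s+1)^3*(a*b*d)
        - (s^2-s+1)^2*(((s-1)^2*a+b+s^2*d)*b*d + ((s-1)^2*b+d+s^2*a)*a*d
            + ((s-1)^2*d+a+s^2*b)*a*b)
      = (s-1)^2 * (s^2*(a^3+b^3+d^3) + (1-2*s^3)*(a^2*d+a*b^2+b*d^2)
          + (s^4-2*s)*(a^2*b+b^2*d+d^2*a) + (6*s^2-3*(s^2-s+1)^2)*(a*b*d)) := by ring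
  rw [key]
  exact mul_nonneg (sq_nonneg _) h

/-- Nonnegativity of the `{0,1}` principal `2×2` minor. -/
private lemma minor1_nonneg (s a b d : ℝ) (ha : 0 ≤ a) (hb : 0 ≤ b) (hd : 0 ≤ d) :
    0 ≤ ((s-1)^2*a+b+s^2*d)*((s-1)^2*b+d+s^2*a) - (s^2-s+1)^2*(a*b) := by
  have key : ((s-1)^2*a+b+s^2*d)*((s-1)^2*b+d+s^2*a) - (s^2-s+1)^2*(a*b)
      = (s-1)^2*(s*a-b)^2 + (s-1)^2*(a*d) + b*d + s^2*(s-1)^2*(b*d) + s^2*d^2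
        + s^4*(a*d) := by ring
  rw [key]
  have h1 : 0 ≤ (s-1)^2*(s*a-b)^2 := mul_nonneg (sq_nonneg _) (sq_nonneg _)
  have h2 : 0 ≤ (s-1)^2*(a*d) := mul_nonneg (sq_nonneg _) (mul_nonneg ha hd)
  have h3 : 0 ≤ s^2*(s-1)^2*(b*d) :=
    mul_nonneg (mul_nonneg (sq_nonneg _) (sq_nonneg _)) (mul_nonneg hb hd)
  have h4 : 0 ≤ s^4*(a*d) := mul_nonneg (by positivity) (mul_nonneg ha hd)
  have h5 : 0 ≤ s^2*d^2 := mul_nonneg (sq_nonneg _) (sq_nonneg _)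
  have h6 : 0 ≤ b*d := mul_nonneg hb hd
  linarith

/-- Nonnegativity of the `{1,2}` principal `2×2` minor. -/
private lemma minor2_nonneg (s a b d : ℝ) (ha : 0 ≤ a) (hb : 0 ≤ b) (hd : 0 ≤ d) :
    0 ≤ ((s-1)^2*b+d+s^2*a)*((s-1)^2*d+a+s^2*b) - (s^2-s+1)^2*(b*d) := by
  have key : ((s-1)^2*b+d+s^2*a)*((s-1)^2*d+a+s^2*b) - (s^2-s+1)^2*(b*d)
      = (s-1)^2*(s*b-d)^2 + (s-1)^2*(a*b) + a*d + s^2*(s-1)^2*(a*d) + s^2*a^2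
        + s^4*(a*b) := by ring
  rw [key]
  have h1 : 0 ≤ (s-1)^2*(s*b-d)^2 := mul_nonneg (sq_nonneg _) (sq_nonneg _)
  have h2 : 0 ≤ (s-1)^2*(a*b) := mul_nonneg (sq_nonneg _) (mul_nonneg ha hb)
  have h3 : 0 ≤ s^2*(s-1)^2*(a*d) :=
    mul_nonneg (mul_nonneg (sq_nonneg _) (sq_nonneg _)) (mul_nonneg ha hd)
  have h4 : 0 ≤ s^4*(a*b) := mul_nonneg (by positivity) (mul_nonneg ha hb)
  have h5 : 0 ≤ s^2*a^2 := mul_nonneg (sq_nonneg _) (sq_nonneg _)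
  have h6 : 0 ≤ a*d := mul_nonneg ha hd
  linarith

/-- Nonnegativity of the `{0,2}` principal `2×2` minor. -/
private lemma minor3_nonneg (s a b d : ℝ) (ha : 0 ≤ a) (hb : 0 ≤ b) (hd : 0 ≤ d) :
    0 ≤ ((s-1)^2*a+b+s^2*d)*((s-1)^2*d+a+s^2*b) - (s^2-s+1)^2*(a*d) := by
  have key : ((s-1)^2*a+b+s^2*d)*((s-1)^2*d+a+s^2*b) - (s^2-s+1)^2*(a*d)
      = (s-1)^2*(a-s*d)^2 + s^2*(s-1)^2*(a*b) + (s-1)^2*(b*d) + a*b + s^2*b^2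
        + s^4*(b*d) := by ring
  rw [key]
  have h1 : 0 ≤ (s-1)^2*(a-s*d)^2 := mul_nonneg (sq_nonneg _) (sq_nonneg _)
  have h2 : 0 ≤ s^2*(s-1)^2*(a*b) :=
    mul_nonneg (mul_nonneg (sq_nonneg _) (sq_nonneg _)) (mul_nonneg ha hb)
  have h3 : 0 ≤ (s-1)^2*(b*d) := mul_nonneg (sq_nonneg _) (mul_nonneg hb hd)
  have h4 : 0 ≤ s^4*(b*d) := mul_nonneg (by positivity) (mul_nonneg hb hd)
  have h5 : 0 ≤ s^2*b^2 := mul_nonneg (sq_nonneg _) (sq_nonneg _)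
  have h6 : 0 ≤ a*b := mul_nonneg ha hb
  linarith

/-- Nonnegativity of the determinant of the ε-shifted matrix. -/
private lemma det_eps_nonneg (s e a b d : ℝ) (he : 0 ≤ e)
    (ha : 0 ≤ a) (hb : 0 ≤ b) (hd : 0 ≤ d) :
    0 ≤ ((s-1)^2*a+b+s^2*d+e)*((s-1)^2*b+d+s^2*a+e)*((s-1)^2*d+a+s^2*b+e)
        - 2*(s^2-s+1)^3*(a*b*d)
        - (s^2-s+1)^2*(((s-1)^2*a+b+s^2*d+e)*b*d + ((s-1)^2*b+d+s^2*a+e)*a*d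
            + ((s-1)^2*d+a+s^2*b+e)*a*b) := by
  have hA0 : 0 ≤ (s-1)^2*a+b+s^2*d :=
    add_nonneg (add_nonneg (mul_nonneg (sq_nonneg _) ha) hb) (mul_nonneg (sq_nonneg _) hd)
  have hA1 : 0 ≤ (s-1)^2*b+d+s^2*a :=
    add_nonneg (add_nonneg (mul_nonneg (sq_nonneg _) hb) hd) (mul_nonneg (sq_nonneg _) ha)
  have hA2 : 0 ≤ (s-1)^2*d+a+s^2*b :=
    add_nonneg (add_nonneg (mul_nonneg (sq_nonneg _) hd) ha) (mul_nonneg (sq_nonneg _) hb)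
  have hF0 := det_bare_nonneg s a b d ha hb hd
  have hm1 := minor1_nonneg s a b d ha hb hd
  have hm2 := minor2_nonneg s a b d ha hb hd
  have hm3 := minor3_nonneg s a b d ha hb hd
  nlinarith [mul_nonneg he hm1, mul_nonneg he hm2, mul_nonneg he hm3,
    mul_nonneg (mul_nonneg he he) hA0, mul_nonneg (mul_nonneg he he) hA1,
    mul_nonneg (mul_nonneg he he) hA2, mul_nonneg (mul_nonneg he he) he, hF0]

/-- A symmetric `3×3` matrix with positive upper-left minors and nonnegative determinant
gives a nonnegative quadratic form (Schur complement argument). -/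
private lemma generic_schur (a0 a1 a2 b01 b02 b12 y0 y1 y2 : ℝ)
    (ha0 : 0 < a0) (hm1 : 0 < a0*a1 - b01^2)
    (hdet : 0 ≤ a0*a1*a2 + 2*b01*b02*b12 - a0*b12^2 - a1*b02^2 - a2*b01^2) :
    0 ≤ a0*y0^2 + a1*y1^2 + a2*y2^2 + 2*b01*(y0*y1) + 2*b02*(y0*y2) + 2*b12*(y1*y2) := by
  have key : (a0*a1 - b01^2) * a0 *
        (a0*y0^2 + a1*y1^2 + a2*y2^2 + 2*b01*(y0*y1) + 2*b02*(y0*y2) + 2*b12*(y1*y2))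
      = (a0*a1 - b01^2) * (a0*y0 + b01*y1 + b02*y2)^2
        + ((a0*a1 - b01^2)*y1 + (a0*b12 - b01*b02)*y2)^2
        + a0 * (a0*a1*a2 + 2*b01*b02*b12 - a0*b12^2 - a1*b02^2 - a2*b01^2) * y2^2 := by
    ring
  have hrhs : 0 ≤ (a0*a1 - b01^2) * (a0*y0 + b01*y1 + b02*y2)^2
        + ((a0*a1 - b01^2)*y1 + (a0*b12 - b01*b02)*y2)^2
        + a0 * (a0*a1*a2 + 2*b01*b02*b12 - a0*b12^2 - a1*b02^2 - a2*b01^2) * y2^2 :=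
    add_nonneg (add_nonneg (mul_nonneg hm1.le (sq_nonneg _)) (sq_nonneg _))
      (mul_nonneg (mul_nonneg ha0.le hdet) (sq_nonneg _))
  nlinarith [mul_pos hm1 ha0, key, hrhs]

set_option maxHeartbeats 1000000 in
/-- The ε-regularized biquadratic form is nonnegative. -/
private lemma pe_nonneg (s e x0 x1 x2 y0 y1 y2 : ℝ) (he : 0 < e) :
    0 ≤ ((s-1)^2*x0^2 + x1^2 + s^2*x2^2)*y0^2
      + ((s-1)^2*x1^2 + x2^2 + s^2*x0^2)*y1^2
      + ((s-1)^2*x2^2 + x0^2 + s^2*x1^2)*y2^2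
      - 2*(s^2-s+1)*(x0*x1*(y0*y1) + x0*x2*(y0*y2) + x1*x2*(y1*y2))
      + e*(y0^2+y1^2+y2^2) := by
  set a := x0^2 with hadef
  set b := x1^2 with hbdef
  set d := x2^2 with hddef
  have ha : 0 ≤ a := sq_nonneg x0
  have hb : 0 ≤ b := sq_nonneg x1
  have hd : 0 ≤ d := sq_nonneg x2
  have hA0 : 0 ≤ (s-1)^2*a+b+s^2*d :=
    add_nonneg (add_nonneg (mul_nonneg (sq_nonneg _) ha) hb) (mul_nonneg (sq_nonneg _) hd)
  have hA1 : 0 ≤ (s-1)^2*b+d+s^2*a :=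
    add_nonneg (add_nonneg (mul_nonneg (sq_nonneg _) hb) hd) (mul_nonneg (sq_nonneg _) ha)
  have ha0 : 0 < (s-1)^2*a+b+s^2*d+e := by linarith
  have hm1bare := minor1_nonneg s a b d ha hb hd
  have hm1 : 0 < ((s-1)^2*a+b+s^2*d+e)*((s-1)^2*b+d+s^2*a+e)
      - (-(s^2-s+1)*x0*x1)^2 := by
    have hsq : (-(s^2-s+1)*x0*x1)^2 = (s^2-s+1)^2*(a*b) := by
      rw [hadef, hbdef]; ring
    rw [hsq]
    nlinarith [mul_pos he he, mul_nonneg he.le hA0, mul_nonneg he.le hA1]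
  have hdet0 := det_eps_nonneg s e a b d he.le ha hb hd
  have hdet : 0 ≤ ((s-1)^2*a+b+s^2*d+e)*(((s-1)^2*b+d+s^2*a+e))*((s-1)^2*d+a+s^2*b+e)
        + 2*(-(s^2-s+1)*x0*x1)*(-(s^2-s+1)*x0*x2)*(-(s^2-s+1)*x1*x2)
        - ((s-1)^2*a+b+s^2*d+e)*(-(s^2-s+1)*x1*x2)^2
        - ((s-1)^2*b+d+s^2*a+e)*(-(s^2-s+1)*x0*x2)^2
        - ((s-1)^2*d+a+s^2*b+e)*(-(s^2-s+1)*x0*x1)^2 := by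
    refine hdet0.trans_eq ?_
    rw [hadef, hbdef, hddef]; ring
  have hmain := generic_schur ((s-1)^2*a+b+s^2*d+e) ((s-1)^2*b+d+s^2*a+e)
    ((s-1)^2*d+a+s^2*b+e) (-(s^2-s+1)*x0*x1) (-(s^2-s+1)*x0*x2) (-(s^2-s+1)*x1*x2)
    y0 y1 y2 ha0 hm1 hdet
  refine hmain.trans_eq ?_
  rw [hadef, hbdef, hddef]; ring

set_option maxHeartbeats 1000000 in
/-- Removing the ε: the biquadratic form is nonnegative. -/
private lemma p_nonneg (t x0 x1 x2 y0 y1 y2 : ℝ) :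
    0 ≤ ((t^2-1)^2*x0^2 + x1^2 + t^4*x2^2)*y0^2
      + ((t^2-1)^2*x1^2 + x2^2 + t^4*x0^2)*y1^2
      + ((t^2-1)^2*x2^2 + x0^2 + t^4*x1^2)*y2^2
      - 2*(t^4-t^2+1)*(x0*x1*(y0*y1) + x0*x2*(y0*y2) + x1*x2*(y1*y2)) := by
  set P := ((t^2-1)^2*x0^2 + x1^2 + t^4*x2^2)*y0^2
      + ((t^2-1)^2*x1^2 + x2^2 + t^4*x0^2)*y1^2
      + ((t^2-1)^2*x2^2 + x0^2 + t^4*x1^2)*y2^2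
      - 2*(t^4-t^2+1)*(x0*x1*(y0*y1) + x0*x2*(y0*y2) + x1*x2*(y1*y2)) with hP
  by_contra hc
  push_neg at hc
  set Y := y0^2+y1^2+y2^2 with hY
  have hYnn : 0 ≤ Y := by positivity
  have hY1 : (0:ℝ) < Y + 1 := by linarith
  have he : 0 < -P/(Y+1) := div_pos (by linarith) hY1
  have h1 := pe_nonneg (t^2) (-P/(Y+1)) x0 x1 x2 y0 y1 y2 he
  have h2 : 0 ≤ P + (-P/(Y+1))*Y := by
    refine h1.trans_eq ?_
    rw [hP, hY]; ring
  have h3 : (P + (-P/(Y+1))*Y)*(Y+1) = P := by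
    field_simp
    ring
  nlinarith [mul_nonneg h2 hY1.le]

/-- `Φ_t(xxᵀ)` is positive semidefinite. -/
private lemma phi_posSemidef (t : ℝ) (x : Fin 3 → ℝ) :
    (Phi t (vecMulVec x x)).PosSemidef := by
  refine .of_dotProduct_mulVec_nonneg ?_ ?_
  · ext i j
    fin_cases i <;> fin_cases j <;>
      simp [Phi, vecMulVec, Matrix.conjTranspose, Matrix.transpose, mul_comm]
  · intro z
    have key := p_nonneg t (x 0) (x 1) (x 2) (z 0) (z 1) (z 2)
    refine key.trans_eq ?_
    simp [dotProduct, Matrix.mulVec, Phi, vecMulVec, Fin.sum_univ_three]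
    ring

/-- For `t ∉ {-1, 0, 1}` and nonzero `x, y ∈ ℝ³`, if `p_t(x, y) = 0` then `y` lies in the
kernel of the positive semidefinite matrix `Φ_t(xxᵀ)`. -/
theorem mem_kernel_of_pform_eq_zero (t : ℝ) (ht : t ∉ ({-1, 0, 1} : Set ℝ))
    (x y : Fin 3 → ℝ) (hx : x ≠ 0) (hy : y ≠ 0) (h : pform t x y = 0) :
    (Phi t (vecMulVec x x)).mulVec y = 0 := by
  have hpsd := phi_posSemidef t x
  have h0 : star y ⬝ᵥ (Phi t (vecMulVec x x)) *ᵥ y = 0 := by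
    simpa [pform] using h
  exact (hpsd.dotProduct_mulVec_zero_iff y).mp h0
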